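/- Let k ≥ 1 and let π = (π₁, π₂) be the 2-layer drawing of W_k obtained by placing V₁ = {(x,y) ∈ V(W_k) : y odd} and V₂ = V(W_k) ∖ V₁ on the two layers, each sorted lexicographically by key (y,x). Then every row edge of W_k crosses at most k − 1 other row edges in π; that is, the subdrawing of π induced by the row edges is (k−1)-planar. -/

import Mathlib

/-- The vertices of the graph `W_k`: the `k` rows `{1, …, k} × {1, …, 4k(3k+6)}`
together with the hair vertices `(k+1, 4ky−2)` and `(k+2, 4ky−1)` for `y ∈ {1, …, 3k+6}`. -/
def WkVerts (k : ℕ) : Finset (ℕ × ℕ) :=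
  (Finset.Icc 1 k ×ˢ Finset.Icc 1 (4 * k * (3 * k + 6))) ∪
    (Finset.Icc 1 (3 * k + 6)).image (fun y => (k + 1, 4 * k * y - 2)) ∪
    (Finset.Icc 1 (3 * k + 6)).image (fun y => (k + 2, 4 * k * y - 1))

abbrev WkVert (k : ℕ) : Type := {p : ℕ × ℕ // p ∈ WkVerts k}

/-- The edge relation of `W_k`: row edges `{(x,y), (x,y+1)}` for `x ∈ {1, …, k}`, and,
for every `y ∈ {1, …, 3k+6}`, the non-row edges
`{(x, 4k(y−1)+4x−3), (x+1, 4k(y−1)+4x−2)}` for `x ∈ {1, …, k−1}` together with the hair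
edges `{(k, 4ky−3), (k+1, 4ky−2)}` and `{(k+1, 4ky−2), (k+2, 4ky−1)}`. -/
def WkRel (k : ℕ) (p q : ℕ × ℕ) : Prop :=
  (1 ≤ p.1 ∧ p.1 ≤ k ∧ q.1 = p.1 ∧ q.2 = p.2 + 1) ∨
  (∃ y, 1 ≤ y ∧ y ≤ 3 * k + 6 ∧
    ((∃ x, 1 ≤ x ∧ x ≤ k - 1 ∧ p = (x, 4 * k * (y - 1) + 4 * x - 3) ∧
        q = (x + 1, 4 * k * (y - 1) + 4 * x - 2)) ∨
      (p = (k, 4 * k * y - 3) ∧ q = (k + 1, 4 * k * y - 2)) ∨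
      (p = (k + 1, 4 * k * y - 2) ∧ q = (k + 2, 4 * k * y - 1))))

/-- The graph `W_k`. -/
def Wk (k : ℕ) : SimpleGraph (WkVert k) :=
  SimpleGraph.fromRel fun p q => WkRel k p.val q.val

/-- An edge of `W_k` is a row edge if its endpoints lie in the same row. -/
def IsRowEdgeW (k : ℕ) (e : Sym2 (WkVert k)) : Prop :=
  e ∈ (Wk k).edgeSet ∧ ∃ u v : WkVert k, e = s(u, v) ∧ u.val.1 = v.val.1

/-- An edge of `W_k` is a non-row edge if its endpoints lie in different rows. -/
def IsNonRowEdgeW (k : ℕ) (e : Sym2 (WkVert k)) : Prop :=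
  e ∈ (Wk k).edgeSet ∧ ∃ u v : WkVert k, e = s(u, v) ∧ u.val.1 ≠ v.val.1

/-- The vertices `(x, y)` of `W_k` with `y` odd. -/
def V1 (k : ℕ) : Finset (WkVert k) :=
  (WkVerts k).attach.filter fun p => p.val.2 % 2 = 1

/-- The vertices `(x, y)` of `W_k` with `y` even. -/
def V2 (k : ℕ) : Finset (WkVert k) :=
  (WkVerts k).attach.filter fun p => p.val.2 % 2 = 0

/-- A 2-layer drawing of a bipartite graph `G` with bipartition `(X, Y)`:
the vertices of `X` (resp. `Y`) are placed at positions `1, …, |X|` (resp. `1, …, |Y|`)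
on two parallel lines, i.e. `pos` restricts to bijections `X → {1, …, |X|}` and
`Y → {1, …, |Y|}`. -/
structure TwoLayerDrawing {V : Type*} (G : SimpleGraph V) (X Y : Finset V) where
  pos : V → ℕ
  cover : ∀ v : V, v ∈ X ∨ v ∈ Y
  disj : ∀ v : V, ¬(v ∈ X ∧ v ∈ Y)
  bipart : ∀ u v : V, G.Adj u v → ((u ∈ X ∧ v ∈ Y) ∨ (u ∈ Y ∧ v ∈ X))
  bijX : Set.BijOn pos ↑X (Set.Icc 1 X.card)
  bijY : Set.BijOn pos ↑Y (Set.Icc 1 Y.card)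

/-- Two edges `{x₁, y₁}` and `{x₂, y₂}` with `x₁, x₂ ∈ X`, `y₁, y₂ ∈ Y` cross in the
drawing iff one has its `X`-endpoint to the left of the other's but its `Y`-endpoint
to the right. -/
def TwoLayerDrawing.Crosses {V : Type*} {G : SimpleGraph V} {X Y : Finset V}
    (D : TwoLayerDrawing G X Y) (e₁ e₂ : Sym2 V) : Prop :=
  ∃ x₁ y₁ x₂ y₂ : V, x₁ ∈ X ∧ x₂ ∈ X ∧ y₁ ∈ Y ∧ y₂ ∈ Y ∧
    e₁ = s(x₁, y₁) ∧ e₂ = s(x₂, y₂) ∧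
    ((D.pos x₁ < D.pos x₂ ∧ D.pos y₂ < D.pos y₁) ∨
      (D.pos x₂ < D.pos x₁ ∧ D.pos y₁ < D.pos y₂))

/-- A 2-layer drawing is `k`-planar if every edge crosses at most `k` other edges. -/
def TwoLayerDrawing.IsKPlanar {V : Type*} {G : SimpleGraph V} {X Y : Finset V}
    (D : TwoLayerDrawing G X Y) (k : ℕ) : Prop :=
  ∀ e ∈ G.edgeSet, {e' | e' ∈ G.edgeSet ∧ D.Crosses e e'}.ncard ≤ k

/-- `G` is a 2-layer `k`-planar graph if it admits a 2-layer `k`-planar drawing with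
respect to some bipartition. -/
def IsTwoLayerKPlanar {V : Type*} (G : SimpleGraph V) (k : ℕ) : Prop :=
  ∃ (X Y : Finset V) (D : TwoLayerDrawing G X Y), D.IsKPlanar k

/-- The drawing `π = (π₁, π₂)` of `W_k` sorts each layer lexicographically by
the key `(y, x)`. -/
def LexSorted {k : ℕ} (D : TwoLayerDrawing (Wk k) (V1 k) (V2 k)) : Prop :=
  ∀ u v : WkVert k, ((u ∈ V1 k ∧ v ∈ V1 k) ∨ (u ∈ V2 k ∧ v ∈ V2 k)) →
    (D.pos u < D.pos v ↔ (u.val.2 < v.val.2 ∨ (u.val.2 = v.val.2 ∧ u.val.1 < v.val.1)))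

lemma mem_V1_iff {k : ℕ} (v : WkVert k) : v ∈ V1 k ↔ v.val.2 % 2 = 1 := by
  simp [V1]

lemma mem_V2_iff {k : ℕ} (v : WkVert k) : v ∈ V2 k ↔ v.val.2 % 2 = 0 := by
  simp [V2]

lemma rowEdge_data {k : ℕ} {e : Sym2 (WkVert k)} (h : IsRowEdgeW k e) :
    ∃ (x y : ℕ) (h1 : (x, y) ∈ WkVerts k) (h2 : (x, y + 1) ∈ WkVerts k),
      1 ≤ x ∧ x ≤ k ∧ e = s(⟨(x, y), h1⟩, ⟨(x, y + 1), h2⟩) := by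
  obtain ⟨he, u, v, rfl, hrow⟩ := h
  rw [SimpleGraph.mem_edgeSet, Wk, SimpleGraph.fromRel_adj] at he
  obtain ⟨hne, hrel | hrel⟩ := he
  · rcases hrel with ⟨ha, hb, hc, hd⟩ | ⟨y', _, _, ⟨x', _, _, hp, hq⟩ | ⟨hp, hq⟩ | ⟨hp, hq⟩⟩
    · refine ⟨u.val.1, u.val.2, ?_, ?_, ha, hb, ?_⟩
      · exact u.property
      · have : ((u.val.1, u.val.2 + 1) : ℕ × ℕ) = v.val := by
          rw [← hc, ← hd]
        rw [this]; exact v.property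
      · congr 1
        exact Subtype.ext (Prod.ext hc hd)
    all_goals (rw [hp, hq] at hrow; simp at hrow)
  · rcases hrel with ⟨ha, hb, hc, hd⟩ | ⟨y', _, _, ⟨x', _, _, hp, hq⟩ | ⟨hp, hq⟩ | ⟨hp, hq⟩⟩
    · refine ⟨v.val.1, v.val.2, ?_, ?_, ha, hb, ?_⟩
      · exact v.property
      · have : ((v.val.1, v.val.2 + 1) : ℕ × ℕ) = u.val := by
          rw [← hc, ← hd]
        rw [this]; exact u.property
      · rw [Sym2.eq_swap]
        congr 1
        exact Subtype.ext (Prod.ext hc hd)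
    all_goals (rw [hp, hq] at hrow; simp at hrow)

lemma cross_data {k : ℕ} (D : TwoLayerDrawing (Wk k) (V1 k) (V2 k)) (hD : LexSorted D)
    {x y x' y' : ℕ} {h1 : (x, y) ∈ WkVerts k} {h2 : (x, y + 1) ∈ WkVerts k}
    {h1' : (x', y') ∈ WkVerts k} {h2' : (x', y' + 1) ∈ WkVerts k}
    (hcr : D.Crosses (s(⟨(x, y), h1⟩, ⟨(x, y + 1), h2⟩))
      (s(⟨(x', y'), h1'⟩, ⟨(x', y' + 1), h2'⟩))) :
    (y' = y + 1 ∧ x' < x) ∨ (y = y' + 1 ∧ x < x') := by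
  obtain ⟨x₁, y₁, x₂, y₂, hx₁, hx₂, hy₁, hy₂, he1, he2, hpos⟩ := hcr
  rw [hD x₁ x₂ (Or.inl ⟨hx₁, hx₂⟩), hD x₂ x₁ (Or.inl ⟨hx₂, hx₁⟩),
    hD y₁ y₂ (Or.inr ⟨hy₁, hy₂⟩), hD y₂ y₁ (Or.inr ⟨hy₂, hy₁⟩)] at hpos
  rw [mem_V1_iff] at hx₁ hx₂
  rw [mem_V2_iff] at hy₁ hy₂
  rw [Sym2.eq_iff] at he1 he2
  rcases he1 with ⟨rfl, rfl⟩ | ⟨rfl, rfl⟩ <;> rcases he2 with ⟨rfl, rfl⟩ | ⟨rfl, rfl⟩ <;>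
    simp only at hpos hx₁ hx₂ hy₁ hy₂ <;> omega

noncomputable def rowOf {k : ℕ} : Sym2 (WkVert k) → ℕ :=
  Sym2.lift ⟨fun u v => min u.val.1 v.val.1, fun u v => min_comm _ _⟩

theorem stmt11 (k : ℕ) (hk : 1 ≤ k)
    (D : TwoLayerDrawing (Wk k) (V1 k) (V2 k)) (hD : LexSorted D) :
    ∀ e, IsRowEdgeW k e → {e' | IsRowEdgeW k e' ∧ D.Crosses e e'}.ncard ≤ k - 1 := by
  intro e he
  obtain ⟨x, y, h1, h2, hx1, hxk, rfl⟩ := rowEdge_data he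
  have hmaps : ∀ e' ∈ {e' | IsRowEdgeW k e' ∧
      D.Crosses (s(⟨(x, y), h1⟩, ⟨(x, y + 1), h2⟩)) e'},
      rowOf e' ∈ ↑((Finset.Icc 1 k).erase x) := by
    intro e' ⟨he', hcr⟩
    obtain ⟨x', y', h1', h2', hx1', hxk', rfl⟩ := rowEdge_data he'
    have hc := cross_data D hD hcr
    simp only [rowOf, Sym2.lift_mk, min_self, Finset.coe_erase, Set.mem_diff,
      Finset.mem_coe, Finset.mem_erase, Finset.mem_Icc, Set.mem_singleton_iff]
    omega
  have hinj : Set.InjOn rowOf {e' | IsRowEdgeW k e' ∧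
      D.Crosses (s(⟨(x, y), h1⟩, ⟨(x, y + 1), h2⟩)) e'} := by
    intro e₁ ⟨he₁, hcr₁⟩ e₂ ⟨he₂, hcr₂⟩ hfe
    obtain ⟨x₁, y₁, g1, g2, _, _, rfl⟩ := rowEdge_data he₁
    obtain ⟨x₂, y₂, g3, g4, _, _, rfl⟩ := rowEdge_data he₂
    have hc₁ := cross_data D hD hcr₁
    have hc₂ := cross_data D hD hcr₂
    simp only [rowOf, Sym2.lift_mk, min_self] at hfe
    obtain rfl : x₁ = x₂ := hfe
    obtain rfl : y₁ = y₂ := by omega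
    rfl
  calc {e' | IsRowEdgeW k e' ∧
        D.Crosses (s(⟨(x, y), h1⟩, ⟨(x, y + 1), h2⟩)) e'}.ncard
      ≤ (↑((Finset.Icc 1 k).erase x) : Set ℕ).ncard :=
        Set.ncard_le_ncard_of_injOn rowOf hmaps hinj (Finset.finite_toSet _)
    _ = k - 1 := by
        rw [Set.ncard_coe_finset,
          Finset.card_erase_of_mem (Finset.mem_Icc.mpr ⟨hx1, hxk⟩), Nat.card_Icc]
        omega
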